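/- Let X ∈ ℝ^{m×p}, W ∈ ℝ^{m×q}, L*, S*, L̂, Ŝ ∈ ℝ^{p×q}, and Y = X(L* + S*) + W. Write Δ_L = L̂ − L* and Δ_S = Ŝ − S*. Assume: (i) ‖Y − X(L̂ + Ŝ)‖_F² ≤ ‖Y − X(L* + S*)‖_F²; (ii) rank(Δ_L) ≤ 2r; (iii) ‖Δ_S‖_0 ≤ 2s; (iv) the smallest eigenvalue of XᵀX is at least κ > 0; (v) the separation inequality ‖Δ_L + Δ_S‖_F² ≥ ½(‖Δ_L‖_F² + ‖Δ_S‖_F²) holds. Then ‖Δ_L‖_F² + ‖Δ_S‖_F² ≤ (32/κ²)·( r·‖XᵀW‖_op² + s·‖XᵀW‖_max² ). -/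

import Mathlib

open Matrix BigOperators

/-- Frobenius norm of a real matrix. -/
noncomputable def frobNorm {p q : ℕ} (M : Matrix (Fin p) (Fin q) ℝ) : ℝ :=
  Real.sqrt (∑ i, ∑ j, (M i j) ^ 2)

/-- ℓ2 operator norm (largest singular value) of a real matrix. -/
noncomputable def opNorm {p q : ℕ} (M : Matrix (Fin p) (Fin q) ℝ) : ℝ :=
  ‖LinearMap.toContinuousLinearMap (Matrix.toEuclideanLin M)‖

/-- Maximum absolute entry of a real matrix. -/
noncomputable def maxNorm {p q : ℕ} (M : Matrix (Fin p) (Fin q) ℝ) : ℝ :=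
  ⨆ i, ⨆ j, |M i j|

/-- Number of nonzero entries of a matrix (the "ℓ0 norm"). -/
noncomputable def sparsity {p q : ℕ} (M : Matrix (Fin p) (Fin q) ℝ) : ℕ :=
  {ij : Fin p × Fin q | M ij.1 ij.2 ≠ 0}.ncard

/-- Euclidean norm of a vector. -/
noncomputable def e2norm {n : ℕ} (v : Fin n → ℝ) : ℝ :=
  Real.sqrt (∑ i, (v i) ^ 2)

/-- Supremum norm of a vector. -/
noncomputable def supNorm {n : ℕ} (v : Fin n → ℝ) : ℝ :=
  ⨆ i, |v i|

/-- The statement that every eigenvalue of the symmetric matrix `A` is at least `κ`,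
expressed through the quadratic form: `vᵀ A v ≥ κ ‖v‖₂²` for every `v`. -/
def minEigBound {n : ℕ} (A : Matrix (Fin n) (Fin n) ℝ) (κ : ℝ) : Prop :=
  ∀ v : Fin n → ℝ, κ * (v ⬝ᵥ v) ≤ v ⬝ᵥ (A *ᵥ v)

/- ### Auxiliary lemmas -/

private lemma cs_sum {ι : Type*} (s : Finset ι) (f g : ι → ℝ) :
    ∑ i ∈ s, f i * g i ≤ Real.sqrt (∑ i ∈ s, f i ^ 2) * Real.sqrt (∑ i ∈ s, g i ^ 2) := by
  have h := Finset.sum_mul_sq_le_sq_mul_sq s f g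
  calc ∑ i ∈ s, f i * g i ≤ |∑ i ∈ s, f i * g i| := le_abs_self _
    _ = Real.sqrt ((∑ i ∈ s, f i * g i) ^ 2) := (Real.sqrt_sq_eq_abs _).symm
    _ ≤ Real.sqrt ((∑ i ∈ s, f i ^ 2) * ∑ i ∈ s, g i ^ 2) := Real.sqrt_le_sqrt h
    _ = _ := Real.sqrt_mul (by positivity) _

private lemma opNorm_nonneg' {a b : ℕ} (M : Matrix (Fin a) (Fin b) ℝ) : 0 ≤ opNorm M :=
  norm_nonneg _

private lemma mulVec_bound {a b : ℕ} (M : Matrix (Fin a) (Fin b) ℝ) (u : Fin b → ℝ) :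
    Real.sqrt (∑ i, (M *ᵥ u) i ^ 2) ≤ opNorm M * Real.sqrt (∑ j, u j ^ 2) := by
  have h := (LinearMap.toContinuousLinearMap (Matrix.toEuclideanLin M)).le_opNorm
      ((WithLp.equiv 2 (Fin b → ℝ)).symm u)
  simp only [LinearMap.coe_toContinuousLinearMap', WithLp.equiv_symm_apply, Matrix.toEuclideanLin_apply_piLp_toLp,
    EuclideanSpace.norm_eq, PiLp.toLp_apply, Real.norm_eq_abs, sq_abs] at h
  exact h

private lemma mulVec_transpose_bound {a b : ℕ} (M : Matrix (Fin a) (Fin b) ℝ) (v : Fin a → ℝ) :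
    Real.sqrt (∑ j, (Mᵀ *ᵥ v) j ^ 2) ≤ opNorm M * Real.sqrt (∑ i, v i ^ 2) := by
  set u := Mᵀ *ᵥ v with hu
  have key : ∑ j, u j ^ 2 = ∑ i, v i * (M *ᵥ u) i := by
    have : ∑ j, u j ^ 2 = u ⬝ᵥ u := by simp [dotProduct, sq]
    rw [this]
    nth_rewrite 1 [hu]
    rw [Matrix.mulVec_transpose, ← Matrix.dotProduct_mulVec]
    simp [dotProduct]
  have h1 : ∑ i, v i * (M *ᵥ u) i ≤
      Real.sqrt (∑ i, v i ^ 2) * Real.sqrt (∑ i, (M *ᵥ u) i ^ 2) := cs_sum _ _ _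
  have h2 := mulVec_bound M u
  have hvn : (0:ℝ) ≤ Real.sqrt (∑ i, v i ^ 2) := Real.sqrt_nonneg _
  have hS : ∑ j, u j ^ 2 ≤ Real.sqrt (∑ i, v i ^ 2) * (opNorm M * Real.sqrt (∑ j, u j ^ 2)) := by
    calc ∑ j, u j ^ 2 = ∑ i, v i * (M *ᵥ u) i := key
      _ ≤ Real.sqrt (∑ i, v i ^ 2) * Real.sqrt (∑ i, (M *ᵥ u) i ^ 2) := h1
      _ ≤ _ := by exact mul_le_mul_of_nonneg_left h2 hvn
  have hsq : Real.sqrt (∑ j, u j ^ 2) ^ 2 = ∑ j, u j ^ 2 := Real.sq_sqrt (by positivity)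
  set t := Real.sqrt (∑ j, u j ^ 2) with ht
  have htn : 0 ≤ t := Real.sqrt_nonneg _
  rcases eq_or_lt_of_le htn with h0 | h0
  · rw [← h0]; exact mul_nonneg (opNorm_nonneg' M) hvn
  · nlinarith [hS, hsq, opNorm_nonneg' M]

private lemma trace_rank_bound {p q : ℕ} (A M : Matrix (Fin p) (Fin q) ℝ) (k : ℕ)
    (hk : A.rank ≤ k) :
    ∑ i, ∑ j, A i j * M i j ≤ Real.sqrt k * frobNorm A * opNorm M := by
  classical
  set E := EuclideanSpace ℝ (Fin p)
  set e : (Fin p → ℝ) ≃ₗ[ℝ] E := (WithLp.linearEquiv 2 ℝ (Fin p → ℝ)).symm with he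
  set U : Submodule ℝ E := (Submodule.span ℝ (Set.range Aᵀ)).map (e : (Fin p → ℝ) →ₗ[ℝ] E) with hUdef
  have hfr : Module.finrank ℝ U ≤ k := by
    have h := LinearEquiv.finrank_map_eq e (Submodule.span ℝ (Set.range Aᵀ))
    rw [Matrix.rank_eq_finrank_span_cols] at hk
    exact le_trans (le_of_eq h) hk
  set n := Module.finrank ℝ U with hn
  set b := stdOrthonormalBasis ℝ U with hb
  have hmem : ∀ j, e (Aᵀ j) ∈ U := fun j =>
    Submodule.mem_map_of_mem (Submodule.subset_span ⟨j, rfl⟩)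
  set x : Fin q → U := fun j => ⟨e (Aᵀ j), hmem j⟩ with hx
  set c : Fin n → Fin q → ℝ := fun l j => b.repr (x j) l with hc
  set β : Fin n → Fin p → ℝ := fun l i => (b l : E) i with hβ
  have hinner : ∀ j, ∑ i, A i j * M i j = ∑ l, c l j * ∑ i, β l i * M i j := by
    intro j
    have h1 : (x j : E) = ∑ l, c l j • (b l : E) := by
      conv_lhs => rw [← b.sum_repr (x j)]
      push_cast
      rfl
    have h2 : ∀ i, A i j = ∑ l, c l j * β l i := by
      intro i
      have h1' := congrArg (WithLp.linearEquiv 2 ℝ (Fin p → ℝ)) h1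
      rw [map_sum] at h1'
      have := congrFun h1' i
      simp [he, hβ, Finset.sum_apply, Matrix.transpose_apply, Pi.smul_apply,
        smul_eq_mul] at this
      exact this
    calc ∑ i, A i j * M i j = ∑ i, (∑ l, c l j * β l i) * M i j := by
          simp_rw [← h2]
      _ = ∑ l, c l j * ∑ i, β l i * M i j := by
          simp_rw [Finset.sum_mul]
          rw [Finset.sum_comm]
          simp_rw [mul_assoc, ← Finset.mul_sum]
  have hβnorm : ∀ l, ∑ i, β l i ^ 2 = 1 := by
    intro l
    have h1 : ‖(b l : E)‖ = 1 := by
      have := b.orthonormal.1 l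
      exact this
    have h2 : ‖(b l : E)‖ = Real.sqrt (∑ i, β l i ^ 2) := by
      rw [EuclideanSpace.norm_eq]
      congr 1
      refine Finset.sum_congr rfl fun i _ => ?_
      rw [Real.norm_eq_abs, sq_abs]
    rw [h2] at h1
    have h3 : (0:ℝ) ≤ ∑ i, β l i ^ 2 := by positivity
    rw [← Real.sq_sqrt h3, h1]
    norm_num
  have hcnorm : ∀ j, ∑ l, c l j ^ 2 = ∑ i, A i j ^ 2 := by
    intro j
    have h1 : ‖b.repr (x j)‖ = ‖x j‖ := b.repr.norm_map (x j)
    have h2 : ‖b.repr (x j)‖ = Real.sqrt (∑ l, c l j ^ 2) := by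
      rw [EuclideanSpace.norm_eq]
      congr 1
      refine Finset.sum_congr rfl fun l _ => ?_
      rw [Real.norm_eq_abs, sq_abs]
    have h3 : ‖x j‖ = Real.sqrt (∑ i, A i j ^ 2) := by
      rw [show ‖x j‖ = ‖(x j : E)‖ from rfl, EuclideanSpace.norm_eq]
      congr 1
      refine Finset.sum_congr rfl fun i _ => ?_
      rw [Real.norm_eq_abs, sq_abs]
      rfl
    rw [h2, h3] at h1
    have h4 : (0:ℝ) ≤ ∑ l, c l j ^ 2 := by positivity
    have h5 : (0:ℝ) ≤ ∑ i, A i j ^ 2 := by positivity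
    rw [← Real.sq_sqrt h4, ← Real.sq_sqrt h5, h1]
  have hw : ∀ l, Real.sqrt (∑ j, (∑ i, β l i * M i j) ^ 2) ≤ opNorm M := by
    intro l
    have h1 : ∀ j, (∑ i, β l i * M i j) = (Mᵀ *ᵥ β l) j := by
      intro j
      simp [Matrix.mulVec, dotProduct, Matrix.transpose_apply, mul_comm]
    calc Real.sqrt (∑ j, (∑ i, β l i * M i j) ^ 2)
        = Real.sqrt (∑ j, (Mᵀ *ᵥ β l) j ^ 2) := by simp_rw [h1]
      _ ≤ opNorm M * Real.sqrt (∑ i, β l i ^ 2) := mulVec_transpose_bound M (β l)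
      _ = opNorm M := by rw [hβnorm l, Real.sqrt_one, mul_one]
  have hfrob : frobNorm A = Real.sqrt (∑ l, ∑ j, c l j ^ 2) := by
    rw [frobNorm]
    congr 1
    rw [Finset.sum_comm]
    rw [show (∑ j, ∑ i, A i j ^ 2) = ∑ j, ∑ l, c l j ^ 2 from
      Finset.sum_congr rfl fun j _ => (hcnorm j).symm]
    exact Finset.sum_comm
  calc ∑ i, ∑ j, A i j * M i j
      = ∑ j, ∑ i, A i j * M i j := Finset.sum_comm
    _ = ∑ j, ∑ l, c l j * ∑ i, β l i * M i j := Finset.sum_congr rfl fun j _ => hinner j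
    _ = ∑ l, ∑ j, c l j * ∑ i, β l i * M i j := Finset.sum_comm
    _ ≤ ∑ l, Real.sqrt (∑ j, c l j ^ 2) * Real.sqrt (∑ j, (∑ i, β l i * M i j) ^ 2) :=
        Finset.sum_le_sum fun l _ => cs_sum _ _ _
    _ ≤ ∑ l, Real.sqrt (∑ j, c l j ^ 2) * opNorm M :=
        Finset.sum_le_sum fun l _ => mul_le_mul_of_nonneg_left (hw l) (Real.sqrt_nonneg _)
    _ = (∑ l, Real.sqrt (∑ j, c l j ^ 2)) * opNorm M := by rw [Finset.sum_mul]
    _ ≤ (Real.sqrt n * frobNorm A) * opNorm M := by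
        refine mul_le_mul_of_nonneg_right ?_ (opNorm_nonneg' M)
        have h := cs_sum Finset.univ (fun _ : Fin n => (1:ℝ)) (fun l => Real.sqrt (∑ j, c l j ^ 2))
        simp only [one_mul, one_pow] at h
        calc ∑ l, Real.sqrt (∑ j, c l j ^ 2)
            ≤ Real.sqrt (∑ _l : Fin n, (1:ℝ)) * Real.sqrt (∑ l, Real.sqrt (∑ j, c l j ^ 2) ^ 2) := h
          _ = Real.sqrt n * frobNorm A := by
              congr 1
              · simp
              · rw [hfrob]
                congr 1
                refine Finset.sum_congr rfl fun l _ => Real.sq_sqrt (by positivity)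
    _ ≤ Real.sqrt k * frobNorm A * opNorm M := by
        have h1 : Real.sqrt n ≤ Real.sqrt k := Real.sqrt_le_sqrt (by exact_mod_cast hfr)
        have h2 : 0 ≤ frobNorm A := Real.sqrt_nonneg _
        exact mul_le_mul_of_nonneg_right (mul_le_mul_of_nonneg_right h1 h2) (opNorm_nonneg' M)

private lemma maxNorm_nonneg' {p q : ℕ} (M : Matrix (Fin p) (Fin q) ℝ) : 0 ≤ maxNorm M :=
  Real.iSup_nonneg fun _ => Real.iSup_nonneg fun _ => abs_nonneg _

private lemma abs_le_maxNorm {p q : ℕ} (M : Matrix (Fin p) (Fin q) ℝ) (i : Fin p) (j : Fin q) :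
    |M i j| ≤ maxNorm M := by
  have h1 : |M i j| ≤ ⨆ j', |M i j'| :=
    le_ciSup (f := fun j' => |M i j'|) (Set.Finite.bddAbove (Set.finite_range _)) j
  have h2 : (⨆ j', |M i j'|) ≤ maxNorm M :=
    le_ciSup (f := fun i => ⨆ j', |M i j'|) (Set.Finite.bddAbove (Set.finite_range _)) i
  exact h1.trans h2

private lemma trace_sparse_bound {p q : ℕ} (S M : Matrix (Fin p) (Fin q) ℝ) (k : ℕ)
    (hk : sparsity S ≤ k) :
    ∑ i, ∑ j, S i j * M i j ≤ Real.sqrt k * frobNorm S * maxNorm M := by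
  classical
  set T : Finset (Fin p × Fin q) := Finset.univ.filter (fun ij => S ij.1 ij.2 ≠ 0) with hT
  have hTcard : T.card ≤ k := by
    have : {ij : Fin p × Fin q | S ij.1 ij.2 ≠ 0} = ↑T := by
      ext ij; simp [hT]
    have h2 : sparsity S = T.card := by rw [sparsity, this, Set.ncard_coe_finset]
    omega
  have hsum : ∑ i, ∑ j, S i j * M i j = ∑ ij ∈ T, S ij.1 ij.2 * M ij.1 ij.2 := by
    rw [← Finset.sum_product', Finset.univ_product_univ]
    refine (Finset.sum_subset (Finset.subset_univ T) ?_).symm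
    intro ij _ hij
    simp only [hT, Finset.mem_filter, Finset.mem_univ, true_and, not_not] at hij
    rw [hij, zero_mul]
  have habs : ∑ ij ∈ T, S ij.1 ij.2 * M ij.1 ij.2 ≤
      (∑ ij ∈ T, |S ij.1 ij.2|) * maxNorm M := by
    rw [Finset.sum_mul]
    refine Finset.sum_le_sum fun ij _ => ?_
    calc S ij.1 ij.2 * M ij.1 ij.2 ≤ |S ij.1 ij.2 * M ij.1 ij.2| := le_abs_self _
      _ = |S ij.1 ij.2| * |M ij.1 ij.2| := abs_mul _ _
      _ ≤ |S ij.1 ij.2| * maxNorm M :=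
          mul_le_mul_of_nonneg_left (abs_le_maxNorm M ij.1 ij.2) (abs_nonneg _)
  have hcs : ∑ ij ∈ T, |S ij.1 ij.2| ≤ Real.sqrt k * frobNorm S := by
    have h := cs_sum T (fun _ => (1:ℝ)) (fun ij => |S ij.1 ij.2|)
    simp only [one_mul, one_pow, sq_abs] at h
    have h1 : Real.sqrt (∑ _ij ∈ T, (1:ℝ)) ≤ Real.sqrt k := by
      refine Real.sqrt_le_sqrt ?_
      rw [Finset.sum_const, nsmul_eq_mul, mul_one]
      exact_mod_cast hTcard
    have h2 : Real.sqrt (∑ ij ∈ T, S ij.1 ij.2 ^ 2) ≤ frobNorm S := by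
      refine Real.sqrt_le_sqrt ?_
      calc ∑ ij ∈ T, S ij.1 ij.2 ^ 2 ≤ ∑ ij : Fin p × Fin q, S ij.1 ij.2 ^ 2 :=
            Finset.sum_le_sum_of_subset_of_nonneg (Finset.subset_univ T)
              (fun _ _ _ => sq_nonneg _)
        _ = ∑ i, ∑ j, S i j ^ 2 := by
            rw [← Finset.univ_product_univ]
            exact Finset.sum_product' Finset.univ Finset.univ (fun i j => S i j ^ 2)
    calc ∑ ij ∈ T, |S ij.1 ij.2| ≤ _ := h
      _ ≤ Real.sqrt k * frobNorm S :=
          mul_le_mul h1 h2 (Real.sqrt_nonneg _) (Real.sqrt_nonneg _)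
  calc ∑ i, ∑ j, S i j * M i j = ∑ ij ∈ T, S ij.1 ij.2 * M ij.1 ij.2 := hsum
    _ ≤ (∑ ij ∈ T, |S ij.1 ij.2|) * maxNorm M := habs
    _ ≤ Real.sqrt k * frobNorm S * maxNorm M :=
        mul_le_mul_of_nonneg_right hcs (maxNorm_nonneg' M)

private lemma two_cs (x y u v : ℝ) :
    x * u + y * v ≤ Real.sqrt (x ^ 2 + y ^ 2) * Real.sqrt (u ^ 2 + v ^ 2) := by
  have h : (x * u + y * v) ^ 2 ≤ (x ^ 2 + y ^ 2) * (u ^ 2 + v ^ 2) := by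
    nlinarith [sq_nonneg (x * v - y * u)]
  calc x * u + y * v ≤ |x * u + y * v| := le_abs_self _
    _ = Real.sqrt ((x * u + y * v) ^ 2) := (Real.sqrt_sq_eq_abs _).symm
    _ ≤ Real.sqrt ((x ^ 2 + y ^ 2) * (u ^ 2 + v ^ 2)) := Real.sqrt_le_sqrt h
    _ = _ := Real.sqrt_mul (by positivity) _

private lemma endgame (κ u v t γ R : ℝ) (hκ : 0 < κ) (ht0 : 0 ≤ t) (hγ0 : 0 ≤ γ)
    (ht2 : t ^ 2 = u ^ 2 + v ^ 2) (hγ2 : γ ^ 2 = 2 * R) (hR0 : 0 ≤ R)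
    (hmain : κ * (t ^ 2 / 2) ≤ 2 * (γ * t)) : u ^ 2 + v ^ 2 ≤ 32 / κ ^ 2 * R := by
  rcases eq_or_lt_of_le ht0 with h0 | h0
  · have h : u ^ 2 + v ^ 2 = 0 := by rw [← ht2, ← h0]; ring
    rw [h]
    exact mul_nonneg (div_nonneg (by norm_num) (sq_nonneg κ)) hR0
  · have hkt : κ * t ≤ 4 * γ := by
      have h1 : (κ * t) * t ≤ (4 * γ) * t := by nlinarith [hmain]
      exact le_of_mul_le_mul_right h1 h0
    have hsq : (κ * t) ^ 2 ≤ (4 * γ) ^ 2 :=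
      pow_le_pow_left₀ (mul_nonneg hκ.le ht0) hkt 2
    have h2 : κ ^ 2 * (u ^ 2 + v ^ 2) ≤ 32 * R := by nlinarith [hsq]
    rw [div_mul_eq_mul_div, le_div_iff₀ (pow_pos hκ 2)]
    nlinarith [h2]

private lemma triple_swap {α : Type*} [AddCommMonoid α] {a b c : ℕ}
    (f : Fin a → Fin b → Fin c → α) :
    ∑ i, ∑ j, ∑ k, f i j k = ∑ k, ∑ j, ∑ i, f i j k := by
  rw [Finset.sum_comm]
  refine Eq.trans (Finset.sum_congr rfl fun j _ => Finset.sum_comm) ?_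
  exact Finset.sum_comm

/-- Deterministic core of the transition estimation error bound for the
low-rank plus sparse estimator: under the optimality condition, rank and sparsity bounds on
the errors, a minimum-eigenvalue condition on `XᵀX`, and the separation inequality,
`‖Δ_L‖_F² + ‖Δ_S‖_F² ≤ (32/κ²)(r‖XᵀW‖_op² + s‖XᵀW‖_max²)`. -/
theorem estimation_error_bound {m p q : ℕ}
    (X : Matrix (Fin m) (Fin p) ℝ) (W : Matrix (Fin m) (Fin q) ℝ)
    (Lstar Sstar Lhat Shat : Matrix (Fin p) (Fin q) ℝ)
    (Y : Matrix (Fin m) (Fin q) ℝ)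
    (hY : Y = X * (Lstar + Sstar) + W)
    (r s : ℕ) (κ : ℝ) (hκ : 0 < κ)
    (hopt : frobNorm (Y - X * (Lhat + Shat)) ^ 2 ≤
      frobNorm (Y - X * (Lstar + Sstar)) ^ 2)
    (hrank : (Lhat - Lstar).rank ≤ 2 * r)
    (hsparse : sparsity (Shat - Sstar) ≤ 2 * s)
    (hmin : minEigBound (Xᵀ * X) κ)
    (hsep : (frobNorm (Lhat - Lstar) ^ 2 + frobNorm (Shat - Sstar) ^ 2) / 2 ≤
      frobNorm ((Lhat - Lstar) + (Shat - Sstar)) ^ 2) :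
    frobNorm (Lhat - Lstar) ^ 2 + frobNorm (Shat - Sstar) ^ 2 ≤
      32 / κ ^ 2 * (r * opNorm (Xᵀ * W) ^ 2 + s * maxNorm (Xᵀ * W) ^ 2) := by
  classical
  set A := Lhat - Lstar with hA
  set B := Shat - Sstar with hB
  set D := A + B with hD
  set M := Xᵀ * W with hM
  have frob_sq : ∀ {p' q' : ℕ} (N : Matrix (Fin p') (Fin q') ℝ),
      frobNorm N ^ 2 = ∑ i, ∑ j, N i j ^ 2 := by
    intro p' q' N
    rw [frobNorm]
    exact Real.sq_sqrt (by positivity)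
  -- rewrite hopt
  have hYW : Y - X * (Lstar + Sstar) = W := by rw [hY]; abel
  have hYD : Y - X * (Lhat + Shat) = W - X * D := by
    rw [hY]
    have h : X * (Lhat + Shat) = X * (Lstar + Sstar) + X * D := by
      rw [← Matrix.mul_add]
      congr 1
      rw [hD, hA, hB]; abel
    rw [h]; abel
  rw [hYW, hYD, frob_sq, frob_sq] at hopt
  -- Step 1: basic inequality
  have hstep1 : ∑ i, ∑ j, ((X * D) i j) ^ 2 ≤ 2 * ∑ i, ∑ j, W i j * (X * D) i j := by
    have expand : ∑ i, ∑ j, (W - X * D) i j ^ 2 =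
        (∑ i, ∑ j, W i j ^ 2) - 2 * (∑ i, ∑ j, W i j * (X * D) i j)
          + ∑ i, ∑ j, ((X * D) i j) ^ 2 := by
      simp_rw [Matrix.sub_apply, sub_sq, Finset.sum_add_distrib, Finset.sum_sub_distrib,
        mul_assoc, ← Finset.mul_sum]
    rw [expand] at hopt
    linarith
  -- Step 2: trace identity
  have hstep2 : ∑ i, ∑ j, W i j * (X * D) i j = ∑ k, ∑ j, D k j * M k j := by
    have lhs1 : ∑ i, ∑ j, W i j * (X * D) i j
        = ∑ i, ∑ j, ∑ k, W i j * (X i k * D k j) := by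
      simp_rw [Matrix.mul_apply, Finset.mul_sum]
    have rhs1 : ∑ k, ∑ j, D k j * M k j
        = ∑ k, ∑ j, ∑ i, D k j * (X i k * W i j) := by
      simp_rw [hM, Matrix.mul_apply, Matrix.transpose_apply, Finset.mul_sum]
    rw [lhs1, rhs1, triple_swap]
    refine Finset.sum_congr rfl fun k _ => Finset.sum_congr rfl fun j _ =>
      Finset.sum_congr rfl fun i _ => by ring
  -- Step 3: restricted eigenvalue
  have hstep3 : κ * ∑ k, ∑ j, D k j ^ 2 ≤ ∑ i, ∑ j, ((X * D) i j) ^ 2 := by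
    have hcol : ∀ j, κ * (∑ k, D k j ^ 2) ≤ ∑ i, ((X * D) i j) ^ 2 := by
      intro j
      have h := hmin (fun k => D k j)
      have e1 : (fun k => D k j) ⬝ᵥ (fun k => D k j) = ∑ k, D k j ^ 2 := by
        simp [dotProduct, sq]
      have e2 : (fun k => D k j) ⬝ᵥ ((Xᵀ * X) *ᵥ fun k => D k j)
          = ∑ i, ((X * D) i j) ^ 2 := by
        rw [← Matrix.mulVec_mulVec, Matrix.dotProduct_mulVec]
        have hv : (fun k => D k j) ᵥ* Xᵀ = X *ᵥ (fun k => D k j) := by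
          rw [← Matrix.mulVec_transpose, Matrix.transpose_transpose]
        rw [hv]
        simp [dotProduct, Matrix.mulVec, Matrix.mul_apply, sq]
      rw [e1, e2] at h
      exact h
    calc κ * ∑ k, ∑ j, D k j ^ 2 = ∑ j, κ * ∑ k, D k j ^ 2 := by
          rw [Finset.sum_comm (s := Finset.univ) (t := Finset.univ)
            (f := fun k j => D k j ^ 2), Finset.mul_sum]
      _ ≤ ∑ j, ∑ i, ((X * D) i j) ^ 2 := Finset.sum_le_sum fun j _ => hcol j
      _ = ∑ i, ∑ j, ((X * D) i j) ^ 2 := Finset.sum_comm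
  -- Step 4: split the trace
  have hsplit : ∑ k, ∑ j, D k j * M k j
      = (∑ k, ∑ j, A k j * M k j) + ∑ k, ∑ j, B k j * M k j := by
    simp_rw [hD, Matrix.add_apply, add_mul, Finset.sum_add_distrib]
  have h5 := trace_rank_bound A M (2 * r) hrank
  have h6 := trace_sparse_bound B M (2 * s) hsparse
  -- notation
  set u := frobNorm A with hu
  set v := frobNorm B with hv
  set a := opNorm M with ha
  set bb := maxNorm M with hbb
  have ha0 : 0 ≤ a := opNorm_nonneg' M
  have hbb0 : 0 ≤ bb := maxNorm_nonneg' M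
  have hu0 : 0 ≤ u := Real.sqrt_nonneg _
  have hv0 : 0 ≤ v := Real.sqrt_nonneg _
  set R := (r : ℝ) * a ^ 2 + (s : ℝ) * bb ^ 2 with hR
  have hR0 : 0 ≤ R :=
    add_nonneg (mul_nonneg (Nat.cast_nonneg r) (sq_nonneg a))
      (mul_nonneg (Nat.cast_nonneg s) (sq_nonneg bb))
  set t := Real.sqrt (u ^ 2 + v ^ 2) with htdef
  have ht0 : 0 ≤ t := Real.sqrt_nonneg _
  have ht2 : t ^ 2 = u ^ 2 + v ^ 2 :=
    Real.sq_sqrt (add_nonneg (sq_nonneg u) (sq_nonneg v))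
  set γ := Real.sqrt (2 * R) with hγdef
  have hγ0 : 0 ≤ γ := Real.sqrt_nonneg _
  have hγ2 : γ ^ 2 = 2 * R := Real.sq_sqrt (by linarith)
  -- cast lemmas
  have hc2r : ((2 * r : ℕ) : ℝ) = 2 * (r : ℝ) := by push_cast; ring
  have hc2s : ((2 * s : ℕ) : ℝ) = 2 * (s : ℝ) := by push_cast; ring
  -- Cauchy-Schwarz on the two terms
  have hx2 : (Real.sqrt ((2 * r : ℕ)) * a) ^ 2 = 2 * (r : ℝ) * a ^ 2 := by
    rw [mul_pow, Real.sq_sqrt (by positivity), hc2r]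
  have hy2 : (Real.sqrt ((2 * s : ℕ)) * bb) ^ 2 = 2 * (s : ℝ) * bb ^ 2 := by
    rw [mul_pow, Real.sq_sqrt (by positivity), hc2s]
  have hcs2 : Real.sqrt ((2 * r : ℕ)) * u * a + Real.sqrt ((2 * s : ℕ)) * v * bb
      ≤ γ * t := by
    have h := two_cs (Real.sqrt ((2 * r : ℕ)) * a) (Real.sqrt ((2 * s : ℕ)) * bb) u v
    have harg : (Real.sqrt ((2 * r : ℕ)) * a) ^ 2 + (Real.sqrt ((2 * s : ℕ)) * bb) ^ 2
        = 2 * R := by rw [hx2, hy2, hR]; ring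
    rw [harg] at h
    calc Real.sqrt ((2 * r : ℕ)) * u * a + Real.sqrt ((2 * s : ℕ)) * v * bb
        = Real.sqrt ((2 * r : ℕ)) * a * u + Real.sqrt ((2 * s : ℕ)) * bb * v := by ring
      _ ≤ Real.sqrt (2 * R) * Real.sqrt (u ^ 2 + v ^ 2) := h
      _ = γ * t := by rw [hγdef, htdef]
  -- main chain
  have hmain : κ * (t ^ 2 / 2) ≤ 2 * (γ * t) := by
    have hchain : κ * ((u ^ 2 + v ^ 2) / 2)
        ≤ 2 * (Real.sqrt ((2 * r : ℕ)) * u * a + Real.sqrt ((2 * s : ℕ)) * v * bb) := by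
      calc κ * ((u ^ 2 + v ^ 2) / 2) ≤ κ * frobNorm D ^ 2 := by
            exact mul_le_mul_of_nonneg_left hsep hκ.le
        _ = κ * ∑ k, ∑ j, D k j ^ 2 := by rw [frob_sq D]
        _ ≤ ∑ i, ∑ j, ((X * D) i j) ^ 2 := hstep3
        _ ≤ 2 * ∑ i, ∑ j, W i j * (X * D) i j := hstep1
        _ = 2 * ((∑ k, ∑ j, A k j * M k j) + ∑ k, ∑ j, B k j * M k j) := by
            rw [hstep2, hsplit]
        _ ≤ 2 * (Real.sqrt ((2 * r : ℕ)) * u * a + Real.sqrt ((2 * s : ℕ)) * v * bb) := by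
            have := add_le_add h5 h6
            linarith
    rw [ht2]
    calc κ * ((u ^ 2 + v ^ 2) / 2) ≤ _ := hchain
      _ ≤ 2 * (γ * t) := by linarith [hcs2]
  -- endgame
  exact endgame κ u v t γ R hκ ht0 hγ0 ht2 hγ2 hR0 hmain
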